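/- Let k ≥ 1 and let M be a 2^k × 2^k circulant matrix over the polynomial ring F_2[x]. Then M can be transformed into an upper-triangular matrix using at most k·2^k elementary row/column addition operations: there exist lists L_row and L_col of pairs (i,j) with i ≠ j, with total length |L_row| + |L_col| = k·2^k, such that the product of the corresponding type-3 elementary matrices E(i+j) applied on the left (for L_row) and on the right (for L_col) of M yields an upper-triangular matrix (all entries strictly below the diagonal are zero). -/

import Mathlib

noncomputable def elemAddPoly (n : ℕ) (i j : Fin n) : Matrix (Fin n) (Fin n) (Polynomial (ZMod 2)) :=
  1 + Matrix.single i j 1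

namespace CircAux


/-! ### Nat arithmetic helpers -/

lemma mod_two_mul (a m : ℕ) : a % (2*m) = a % m + m * (a / m % 2) := by
  rw [mul_comm 2 m]; exact Nat.mod_mul

lemma div_two_mul (a m : ℕ) : a / (2*m) = a / m / 2 := by
  rw [mul_comm 2 m, ← Nat.div_div_eq_div_mul]

lemma lo_iff (a m : ℕ) (hm : 0 < m) : a % (2*m) < m ↔ a / m % 2 = 0 := by
  have h1 := mod_two_mul a m
  have h2 : a % m < m := Nat.mod_lt _ hm
  rcases Nat.mod_two_eq_zero_or_one (a/m) with h | h <;> rw [h] at h1 <;> omega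

lemma hi_iff (a m : ℕ) (hm : 0 < m) : m ≤ a % (2*m) ↔ a / m % 2 = 1 := by
  have h1 := mod_two_mul a m
  have h2 : a % m < m := Nat.mod_lt _ hm
  rcases Nat.mod_two_eq_zero_or_one (a/m) with h | h <;> rw [h] at h1 <;> omega

lemma div_m_eq (a m : ℕ) : a / m = 2 * (a / (2*m)) + a / m % 2 := by
  rw [div_two_mul]; omega

lemma modm_of_lo (a m : ℕ) (hm : 0 < m) (h : a % (2*m) < m) : a % (2*m) = a % m := by
  have h1 := mod_two_mul a m
  have h2 : a % m < m := Nat.mod_lt _ hm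
  rcases Nat.mod_two_eq_zero_or_one (a/m) with hp | hp <;> rw [hp] at h1 <;> omega

lemma modm_of_hi (a m : ℕ) (hm : 0 < m) (h : m ≤ a % (2*m)) : a % (2*m) = a % m + m := by
  have h1 := mod_two_mul a m
  have h2 : a % m < m := Nat.mod_lt _ hm
  rcases Nat.mod_two_eq_zero_or_one (a/m) with hp | hp <;> rw [hp] at h1 <;> omega

lemma add_m_mod (b m : ℕ) (hm : 0 < m) (h : b % (2*m) < m) :
    (b + m) % (2*m) = b % (2*m) + m := by
  conv_lhs => rw [← Nat.div_add_mod b (2*m)]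
  rw [add_assoc, Nat.mul_add_mod]
  exact Nat.mod_eq_of_lt (by omega)

lemma add_m_div (b m : ℕ) (hm : 0 < m) (h : b % (2*m) < m) :
    (b + m) / (2*m) = b / (2*m) := by
  conv_lhs => rw [← Nat.div_add_mod b (2*m), add_assoc, Nat.mul_add_div (by omega)]
  have : (b % (2*m) + m) / (2*m) = 0 := Nat.div_eq_of_lt (by omega)
  omega

lemma sub_m_mod (a m : ℕ) (hm : 0 < m) (h : m ≤ a % (2*m)) :
    (a - m) % (2*m) = a % (2*m) - m := by
  have hma : m ≤ a := le_trans h (Nat.mod_le _ _)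
  have heq : a - m + m = a := by omega
  have hlt : (a-m) % (2*m) < 2*m := Nat.mod_lt _ (by omega)
  rcases Nat.lt_or_ge ((a-m) % (2*m)) m with hc | hc
  · have h2 := add_m_mod (a - m) m hm hc
    rw [heq] at h2; omega
  · have h3 : (a - m + m) % (2*m) = (a-m) % (2*m) - m := by
      conv_lhs => rw [← Nat.div_add_mod (a-m) (2*m)]
      rw [add_assoc, Nat.mul_add_mod]
      have he : (a-m) % (2*m) + m = ((a-m) % (2*m) - m) + 2*m := by omega
      rw [he, Nat.add_mod_right, Nat.mod_eq_of_lt (by omega)]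
    rw [heq] at h3
    omega

lemma sub_m_div (a m : ℕ) (hm : 0 < m) (h : m ≤ a % (2*m)) :
    (a - m) / (2*m) = a / (2*m) := by
  have hma : m ≤ a := le_trans h (Nat.mod_le _ _)
  have hmod := sub_m_mod a m hm h
  have h1 : a = 2*m*(a/(2*m)) + a % (2*m) := (Nat.div_add_mod a (2*m)).symm
  have h2 : a - m = 2*m*(a/(2*m)) + (a % (2*m) - m) := by omega
  rw [h2, Nat.mul_add_div (by omega)]
  have hlt : a % (2*m) < 2*m := Nat.mod_lt _ (by omega)
  have : (a % (2*m) - m) / (2*m) = 0 := Nat.div_eq_of_lt (by omega)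
  omega

lemma sub_mod_helper (u v M : ℕ) (hu : u < M) (hv : v < M) :
    (v + M - u) % M = if u ≤ v then v - u else v + M - u := by
  split
  · next h =>
    have he : v + M - u = (v - u) + M := by omega
    rw [he, Nat.add_mod_right, Nat.mod_eq_of_lt (by omega)]
  · next h => exact Nat.mod_eq_of_lt (by omega)

lemma add_m_lt (b m n : ℕ) (hm : 0 < m) (hdvd : 2*m ∣ n) (hb : b < n) (hlo : b % (2*m) < m) :
    b + m < n := by
  have h1 : b / (2*m) < n / (2*m) := Nat.div_lt_div_of_lt_of_dvd hdvd hb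
  have h2 : 2*m*(n/(2*m)) = n := Nat.mul_div_cancel' hdvd
  have h3 : b = 2*m*(b/(2*m)) + b % (2*m) := (Nat.div_add_mod b (2*m)).symm
  have h4 : 2*m*(b/(2*m)+1) ≤ n := by
    rw [← h2]; exact Nat.mul_le_mul_left _ (by omega)
  have h5 : 2*m*(b/(2*m)+1) = 2*m*(b/(2*m)) + 2*m := by ring
  omega



abbrev R2 := Polynomial (ZMod 2)

lemma add_self (x : R2) : x + x = 0 := CharTwo.add_self_eq_zero (x := x)

lemma mul_list_sum_zero {n : ℕ} (A : Matrix (Fin n) (Fin n) R2)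
    (L : List (Matrix (Fin n) (Fin n) R2)) (h : ∀ B ∈ L, A * B = 0) :
    A * L.sum = 0 := by
  induction L with
  | nil => simp
  | cons B L ih =>
    rw [List.sum_cons, mul_add, h B (by simp), ih (fun C hC => h C (by simp [hC])), add_zero]

lemma prod_elem_eq {n : ℕ} (L : List (Fin n × Fin n))
    (h : ∀ p ∈ L, ∀ q ∈ L, p.2 ≠ q.1) :
    (L.map fun p => elemAddPoly n p.1 p.2).prod
      = 1 + (L.map fun p => Matrix.single p.1 p.2 (1 : R2)).sum := by
  induction L with
  | nil => simp
  | cons p L ih =>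
    rw [List.map_cons, List.prod_cons, List.map_cons, List.sum_cons,
      ih (fun a ha b hb => h a (by simp [ha]) b (by simp [hb]))]
    have hz : Matrix.single p.1 p.2 (1 : R2) *
        (L.map fun q => Matrix.single q.1 q.2 (1 : R2)).sum = 0 := by
      apply mul_list_sum_zero
      intro B hB
      simp only [List.mem_map] at hB
      obtain ⟨q, hq, rfl⟩ := hB
      exact Matrix.single_mul_single_of_ne (h := h p (by simp) q (by simp [hq]) ) ..
    unfold elemAddPoly
    rw [add_mul, one_mul, mul_add, mul_one, hz, add_zero]
    abel

lemma sum_std_entry {n : ℕ} (L : List (Fin n × Fin n)) (a b : Fin n)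
    (hnd : (L.map Prod.snd).Nodup) :
    (L.map fun p => Matrix.single p.1 p.2 (1 : R2)).sum a b
      = if (a, b) ∈ L then 1 else 0 := by
  induction L with
  | nil => simp [Matrix.zero_apply]
  | cons p L ih =>
    rw [List.map_cons] at hnd ⊢
    rw [List.sum_cons]
    have hnd' := hnd.of_cons
    rw [Matrix.add_apply, ih hnd']
    by_cases hp : (a, b) = p
    · subst hp
      have hnot : ((a,b)) ∉ L := by
        intro hmem
        have : b ∈ L.map Prod.snd := List.mem_map.mpr ⟨(a,b), hmem, rfl⟩
        exact (List.nodup_cons.mp hnd).1 this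
      simp [hnot, Matrix.single_apply_same]
    · have h0 : Matrix.single p.1 p.2 (1:R2) a b = 0 := by
        rw [Matrix.single]
        simp only [Matrix.of_apply]
        have : ¬ (p.1 = a ∧ p.2 = b) := by
          intro ⟨h1, h2⟩; exact hp (by rw [← h1, ← h2])
        simp [this]
      rw [h0, zero_add]
      have hiff : ((a,b) ∈ p :: L) ↔ ((a,b) ∈ L) := by
        simp [List.mem_cons, hp]
      rw [if_congr hiff rfl rfl]

/-! ### The round list and its product -/

def roundList (n m : ℕ) : List (Fin n × Fin n) :=
  (List.range n).filterMap (fun i =>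
    if h : i % (2*m) < m ∧ i + m < n ∧ i < n then
      some (⟨i + m, h.2.1⟩, ⟨i, h.2.2⟩) else none)

lemma mem_roundList {n m : ℕ} (hm : 0 < m) (p : Fin n × Fin n) :
    p ∈ roundList n m ↔ ((p.2 : ℕ) % (2*m) < m ∧ (p.1 : ℕ) = (p.2 : ℕ) + m) := by
  rw [roundList, List.mem_filterMap]
  constructor
  · rintro ⟨i, hi, hsome⟩
    split at hsome
    · next hcond =>
      rw [Option.some_inj] at hsome
      rw [← hsome]
      exact ⟨hcond.1, rfl⟩
    · exact absurd hsome (by simp)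
  · rintro ⟨h1, h2⟩
    refine ⟨(p.2 : ℕ), List.mem_range.mpr p.2.isLt, ?_⟩
    have hcond : (p.2:ℕ) % (2*m) < m ∧ (p.2:ℕ) + m < n ∧ (p.2:ℕ) < n :=
      ⟨h1, h2 ▸ p.1.isLt, p.2.isLt⟩
    rw [dif_pos hcond, Option.some_inj]
    ext <;> simp [h2.symm]

noncomputable def Rmat (n m : ℕ) : Matrix (Fin n) (Fin n) R2 :=
  1 + Matrix.of (fun a b : Fin n =>
    if (b:ℕ) % (2*m) < m ∧ (a:ℕ) = (b:ℕ) + m then 1 else 0)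

lemma roundList_prod {n m : ℕ} (hm : 0 < m) :
    ((roundList n m).map fun p => elemAddPoly n p.1 p.2).prod = Rmat n m := by
  have hpair : ∀ p ∈ roundList n m, ∀ q ∈ roundList n m, p.2 ≠ q.1 := by
    intro p hp q hq
    rw [mem_roundList hm] at hp hq
    intro hcontra
    have h1 : (p.2 : ℕ) = (q.2 : ℕ) + m := by rw [hcontra, hq.2]
    have := add_m_mod (q.2 : ℕ) m hm hq.1
    rw [← h1] at this
    omega
  rw [prod_elem_eq _ hpair]
  have hnd : ((roundList n m).map Prod.snd).Nodup := by
    rw [roundList, List.map_filterMap]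
    apply List.Nodup.filterMap _ (List.nodup_range (n := n))
    intro i j b hbi hbj
    simp only [Option.mem_def, Option.map_eq_some_iff] at hbi hbj
    obtain ⟨pi, hpi, rfl⟩ := hbi
    obtain ⟨pj, hpj, hji⟩ := hbj
    split at hpi
    · split at hpj
      · rw [Option.some_inj] at hpi hpj
        have : (pi.2 : ℕ) = i := by rw [← hpi]
        have h2 : (pj.2 : ℕ) = j := by rw [← hpj]
        have h3 : (pi.2 : ℕ) = (pj.2 : ℕ) := by rw [hji]
        omega
      · exact absurd hpj (by simp)
    · exact absurd hpi (by simp)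
  rw [Rmat]
  congr 1
  refine Matrix.ext fun a b => ?_
  rw [sum_std_entry _ _ _ hnd, Matrix.of_apply]
  have hiff := mem_roundList hm (a, b)
  by_cases h : (b:ℕ) % (2*m) < m ∧ (a:ℕ) = (b:ℕ) + m
  · rw [if_pos (hiff.mpr h), if_pos h]
  · rw [if_neg (fun hm2 => h (hiff.mp hm2)), if_neg h]



lemma length_filterMap' {α β : Type*} (f : α → Option β) (l : List α) :
    (l.filterMap f).length = l.countP (fun a => (f a).isSome) := by
  induction l with
  | nil => rfl
  | cons a l ih =>
    rw [List.filterMap_cons, List.countP_cons]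
    cases h : f a with
    | none => simp [h, ih]
    | some b => simp [h, ih]

lemma countP_lt_range (m M : ℕ) (hmM : m ≤ M) :
    (List.range M).countP (fun i => decide (i < m)) = m := by
  obtain ⟨d, rfl⟩ := Nat.exists_eq_add_of_le hmM
  rw [List.range_add, List.countP_append, List.countP_map]
  have h1 : (List.range m).countP (fun i => decide (i < m)) = m := by
    have := List.countP_eq_length (p := fun i => decide (i < m)) (l := List.range m)
    rw [this.mpr (fun i hi => by simp [List.mem_range.mp hi]), List.length_range]
  have h2 : (List.range d).countP ((fun i => decide (i < m)) ∘ (fun x => m + x)) = 0 := by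
    rw [List.countP_eq_zero]
    intro i _
    simp
  rw [h1, h2]; omega

lemma countP_mod_range (m q : ℕ) (hm : 0 < m) :
    (List.range (2*m*q)).countP (fun i => decide (i % (2*m) < m)) = m * q := by
  induction q with
  | zero => simp
  | succ q ih =>
    have : 2*m*(q+1) = 2*m*q + 2*m := by ring
    rw [this, List.range_add, List.countP_append, ih, List.countP_map]
    have hcong : ∀ i ∈ List.range (2*m),
        ((fun i => decide (i % (2*m) < m)) ∘ (fun x => 2*m*q + x)) i = true
          ↔ (fun i => decide (i < m)) i = true := by
      intro i hi
      have hilt := List.mem_range.mp hi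
      simp only [Function.comp_apply, decide_eq_true_eq]
      rw [Nat.mul_add_mod, Nat.mod_eq_of_lt hilt]
    rw [List.countP_congr hcong, countP_lt_range m (2*m) (by omega)]
    ring



lemma roundList_length (n m : ℕ) (hm : 0 < m) (hdvd : 2*m ∣ n) :
    (roundList n m).length = n / 2 := by
  obtain ⟨q, hq⟩ := hdvd
  rw [roundList, length_filterMap']
  have hcong : ∀ i ∈ List.range n,
      (fun i => (if h : i % (2*m) < m ∧ i + m < n ∧ i < n then
        some ((⟨i + m, h.2.1⟩ : Fin n), (⟨i, h.2.2⟩ : Fin n)) else none).isSome) i = true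
        ↔ (fun i => decide (i % (2*m) < m)) i = true := by
    intro i hi
    have hin := List.mem_range.mp hi
    simp only []
    by_cases hc : i % (2*m) < m
    · rw [dif_pos ⟨hc, add_m_lt i m n hm ⟨q, hq⟩ hin hc, hin⟩]
      simp [hc]
    · rw [dif_neg (fun hcc => hc hcc.1)]
      simp [hc]
  rw [List.countP_congr hcong, hq, countP_mod_range m q hm,
    show 2*m*q = 2*(m*q) from by ring, Nat.mul_div_cancel_left _ (by norm_num)]

def finSub {n : ℕ} (a : Fin n) (m : ℕ) : Fin n :=
  ⟨(a:ℕ) - m, lt_of_le_of_lt (Nat.sub_le _ _) a.isLt⟩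

def finAdd {n : ℕ} (b : Fin n) (m : ℕ) : Fin n :=
  ⟨((b:ℕ) + m) % n, Nat.mod_lt _ (lt_of_le_of_lt (Nat.zero_le _) b.isLt)⟩

lemma finAdd_coe {n : ℕ} (b : Fin n) (m : ℕ) (h : (b:ℕ) + m < n) :
    ((finAdd b m : Fin n) : ℕ) = (b:ℕ) + m := Nat.mod_eq_of_lt h



lemma Rmat_mul_apply {n m : ℕ} (hm : 0 < m) (N : Matrix (Fin n) (Fin n) R2) (a b : Fin n) :
    (Rmat n m * N) a b
      = N a b + (if m ≤ (a:ℕ) % (2*m) then N (finSub a m) b else 0) := by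
  rw [Rmat, Matrix.add_mul, Matrix.one_mul, Matrix.add_apply]
  congr 1
  rw [Matrix.mul_apply]
  split
  · next h =>
    have hma : m ≤ (a:ℕ) := le_trans h (Nat.mod_le _ _)
    rw [Finset.sum_eq_single (finSub a m)]
    · have hc1 : ((finSub a m : Fin n):ℕ) % (2*m) < m := by
        show ((a:ℕ) - m) % (2*m) < m
        rw [sub_m_mod _ _ hm h]
        have : (a:ℕ) % (2*m) < 2*m := Nat.mod_lt _ (by omega)
        omega
      have hc2 : (a:ℕ) = ((finSub a m : Fin n):ℕ) + m := by
        show (a:ℕ) = ((a:ℕ) - m) + m; omega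
      rw [Matrix.of_apply, if_pos ⟨hc1, hc2⟩, one_mul]
    · intro c _ hc
      rw [Matrix.of_apply]
      split
      · next hcond =>
        exfalso; apply hc
        have : (c:ℕ) = (a:ℕ) - m := by omega
        exact Fin.ext this
      · rw [zero_mul]
    · intro hmem; exact absurd (Finset.mem_univ _) hmem
  · next h =>
    apply Finset.sum_eq_zero
    intro c _
    rw [Matrix.of_apply]
    split
    · next hcond =>
      exfalso
      have := add_m_mod (c:ℕ) m hm hcond.1
      rw [← hcond.2] at this
      omega
    · rw [zero_mul]

lemma mul_Rmat_apply {n m : ℕ} (hm : 0 < m) (N : Matrix (Fin n) (Fin n) R2) (a b : Fin n) :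
    (N * Rmat n m) a b
      = N a b + (if (b:ℕ) % (2*m) < m ∧ (b:ℕ) + m < n then N a (finAdd b m) else 0) := by
  rw [Rmat, Matrix.mul_add, Matrix.mul_one, Matrix.add_apply]
  congr 1
  rw [Matrix.mul_apply]
  split
  · next h =>
    rw [Finset.sum_eq_single (finAdd b m)]
    · have hcoe := finAdd_coe b m h.2
      rw [Matrix.of_apply, if_pos ⟨h.1, by rw [hcoe]⟩, mul_one]
    · intro c _ hc
      rw [Matrix.of_apply]
      split
      · next hcond =>
        exfalso; apply hc
        apply Fin.ext
        rw [finAdd_coe b m h.2, hcond.2]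
      · rw [mul_zero]
    · intro hmem; exact absurd (Finset.mem_univ _) hmem
  · next h =>
    apply Finset.sum_eq_zero
    intro c _
    rw [Matrix.of_apply]
    split
    · next hcond =>
      exfalso
      rcases Nat.lt_or_ge ((b:ℕ) + m) n with hlt | hge
      · exact h ⟨hcond.1, hlt⟩
      · have := hcond.2 ▸ c.isLt; omega
    · rw [mul_zero]

lemma sandwich_apply {n m : ℕ} (hm : 0 < m) (N : Matrix (Fin n) (Fin n) R2) (a b : Fin n) :
    (Rmat n m * N * Rmat n m) a b
      = (N a b + (if m ≤ (a:ℕ) % (2*m) then N (finSub a m) b else 0))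
        + (if (b:ℕ) % (2*m) < m ∧ (b:ℕ) + m < n then
            (N a (finAdd b m) + (if m ≤ (a:ℕ) % (2*m) then N (finSub a m) (finAdd b m) else 0))
          else 0) := by
  rw [mul_Rmat_apply hm (Rmat n m * N) a b, Rmat_mul_apply hm N a b]
  congr 1
  split
  · rw [Rmat_mul_apply hm N a (finAdd b m)]
  · rfl

def Inv (n M : ℕ) (N : Matrix (Fin n) (Fin n) R2) : Prop :=
  ∃ w : ℕ → R2, ∀ a b : Fin n,
    ((a:ℕ) / M = (b:ℕ) / M →
      N a b = w (((a:ℕ) % M + M - (b:ℕ) % M) % M)) ∧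
    ((b:ℕ) / M < (a:ℕ) / M → N a b = 0)


lemma round_step {n m : ℕ} (hm : 0 < m) (hdvd : 2*m ∣ n)
    (N : Matrix (Fin n) (Fin n) R2) (hN : Inv n (2*m) N) :
    Inv n m (Rmat n m * N * Rmat n m) := by
  obtain ⟨w, hw⟩ := hN
  refine ⟨fun d => w d + w (d + m), fun a b => ?_⟩
  have hAn : (a:ℕ) < n := a.isLt
  have hBn : (b:ℕ) < n := b.isLt
  have hAm : (a:ℕ) % m < m := Nat.mod_lt _ hm
  have hBm : (b:ℕ) % m < m := Nat.mod_lt _ hm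
  have hA2 : (a:ℕ) % (2*m) < 2*m := Nat.mod_lt _ (by omega)
  have hB2 : (b:ℕ) % (2*m) < 2*m := Nat.mod_lt _ (by omega)
  have hS := sandwich_apply hm N a b
  have hfs : ((finSub a m : Fin n) : ℕ) = (a:ℕ) - m := rfl
  constructor
  · -- same m-block
    intro hAB
    have hpar : (a:ℕ) / m % 2 = (b:ℕ) / m % 2 := by rw [hAB]
    have hBB : (a:ℕ) / (2*m) = (b:ℕ) / (2*m) := by
      rw [div_two_mul, div_two_mul, hAB]
    show _ = w (((a:ℕ) % m + m - (b:ℕ) % m) % m) + w ((((a:ℕ) % m + m - (b:ℕ) % m) % m) + m)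
    by_cases hlo : (a:ℕ) % (2*m) < m
    · -- both low
      have hblo : (b:ℕ) % (2*m) < m := by
        rw [lo_iff _ _ hm] at hlo ⊢; omega
      have hbm : (b:ℕ) + m < n := add_m_lt _ m n hm hdvd hBn hblo
      rw [hS, if_neg (by omega), if_pos ⟨hblo, hbm⟩, if_neg (by omega), add_zero, add_zero]
      have hcoe := finAdd_coe b m hbm
      have h1 := (hw a b).1 hBB
      have h2 := (hw a (finAdd b m)).1 (by
        rw [hcoe, add_m_div _ m hm hblo]; exact hBB)
      rw [h1, h2, hcoe]
      rw [add_m_mod _ m hm hblo]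
      rw [modm_of_lo _ m hm hlo, modm_of_lo _ m hm hblo]
      rw [sub_mod_helper ((b:ℕ) % m) ((a:ℕ) % m) (2*m) (by omega) (by omega),
          sub_mod_helper ((b:ℕ) % m + m) ((a:ℕ) % m) (2*m) (by omega) (by omega),
          sub_mod_helper ((b:ℕ) % m) ((a:ℕ) % m) m hBm hAm]
      by_cases hc : (b:ℕ) % m ≤ (a:ℕ) % m
      · rw [if_pos hc, if_pos hc, if_neg (by omega)]
        congr 2 <;> omega
      · rw [if_neg hc, if_neg hc, if_neg (by omega)]
        rw [show (a:ℕ) % m + 2*m - (b:ℕ) % m = ((a:ℕ) % m + m - (b:ℕ) % m) + m from by omega,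
           show (a:ℕ) % m + 2*m - ((b:ℕ) % m + m) = (a:ℕ) % m + m - (b:ℕ) % m from by omega]
        apply add_comm
    · -- both high
      have hhi : m ≤ (a:ℕ) % (2*m) := by omega
      have hbhi : m ≤ (b:ℕ) % (2*m) := by
        rw [hi_iff _ _ hm] at hhi ⊢; omega
      rw [hS, if_pos hhi, if_neg (fun hc => by omega), add_zero]
      have h1 := (hw a b).1 hBB
      have h2 := (hw (finSub a m) b).1 (by
        rw [hfs, sub_m_div _ m hm hhi]; exact hBB)
      rw [h1, h2, hfs]
      rw [sub_m_mod _ m hm hhi, modm_of_hi _ m hm hhi, modm_of_hi _ m hm hbhi]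
      rw [show (a:ℕ) % m + m + 2*m - ((b:ℕ) % m + m) = (a:ℕ) % m + 2*m - (b:ℕ) % m from by omega,
          show (a:ℕ) % m + m - m + 2*m - ((b:ℕ) % m + m) = (a:ℕ) % m + m - (b:ℕ) % m from by omega]
      rw [Nat.mod_eq_of_lt (show (a:ℕ) % m + m - (b:ℕ) % m < 2*m from by omega)]
      rw [sub_mod_helper ((b:ℕ) % m) ((a:ℕ) % m) (2*m) (by omega) (by omega),
          sub_mod_helper ((b:ℕ) % m) ((a:ℕ) % m) m hBm hAm]
      by_cases hc : (b:ℕ) % m ≤ (a:ℕ) % m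
      · rw [if_pos hc, if_pos hc]
        congr 2 <;> omega
      · rw [if_neg hc, if_neg hc]
        rw [show (a:ℕ) % m + 2*m - (b:ℕ) % m = ((a:ℕ) % m + m - (b:ℕ) % m) + m from by omega]
        apply add_comm
  · -- strictly below m-block diagonal
    intro hlt
    have hdea := div_m_eq (a:ℕ) m
    have hdeb := div_m_eq (b:ℕ) m
    by_cases hBB : (a:ℕ) / (2*m) = (b:ℕ) / (2*m)
    · -- same 2m-block: a high, b low
      have hpa : (a:ℕ) / m % 2 = 1 := by omega
      have hpb : (b:ℕ) / m % 2 = 0 := by omega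
      have hhi : m ≤ (a:ℕ) % (2*m) := (hi_iff _ m hm).mpr hpa
      have hblo : (b:ℕ) % (2*m) < m := (lo_iff _ m hm).mpr hpb
      have hbm : (b:ℕ) + m < n := add_m_lt _ m n hm hdvd hBn hblo
      have hcoe := finAdd_coe b m hbm
      rw [hS, if_pos hhi, if_pos ⟨hblo, hbm⟩, if_pos hhi]
      have h1 := (hw a b).1 hBB
      have h2 := (hw (finSub a m) b).1 (by rw [hfs, sub_m_div _ m hm hhi]; exact hBB)
      have h3 := (hw a (finAdd b m)).1 (by rw [hcoe, add_m_div _ m hm hblo]; exact hBB)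
      have h4 := (hw (finSub a m) (finAdd b m)).1 (by
        rw [hfs, hcoe, sub_m_div _ m hm hhi, add_m_div _ m hm hblo]; exact hBB)
      rw [h1, h2, h3, h4, hfs, hcoe]
      rw [sub_m_mod _ m hm hhi, add_m_mod _ m hm hblo,
          modm_of_hi _ m hm hhi, modm_of_lo _ m hm hblo]
      rw [show (a:ℕ) % m + m + 2*m - (b:ℕ) % m
            = ((a:ℕ) % m + m - (b:ℕ) % m) + 2*m from by omega,
          Nat.add_mod_right,
          Nat.mod_eq_of_lt (show (a:ℕ) % m + m - (b:ℕ) % m < 2*m from by omega)]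
      rw [show (a:ℕ) % m + m - m + 2*m - (b:ℕ) % m
            = (a:ℕ) % m + 2*m - (b:ℕ) % m from by omega]
      rw [show (a:ℕ) % m + m + 2*m - ((b:ℕ) % m + m)
            = (a:ℕ) % m + 2*m - (b:ℕ) % m from by omega]
      rw [show (a:ℕ) % m + m - m + 2*m - ((b:ℕ) % m + m)
            = (a:ℕ) % m + m - (b:ℕ) % m from by omega,
          Nat.mod_eq_of_lt (show (a:ℕ) % m + m - (b:ℕ) % m < 2*m from by omega)]
      have hring : ∀ x y : R2, x + y + (y + x) = (x + x) + (y + y) := fun x y => by ring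
      rw [hring, add_self, add_self, add_zero]
    · -- different 2m-blocks
      have hblt : (b:ℕ) / (2*m) < (a:ℕ) / (2*m) := by omega
      have z1 : N a b = 0 := (hw a b).2 hblt
      have t1 : (if m ≤ (a:ℕ) % (2*m) then N (finSub a m) b else 0) = 0 := by
        split
        · next hha =>
          exact (hw (finSub a m) b).2 (by rw [hfs, sub_m_div _ m hm hha]; exact hblt)
        · rfl
      have t2 : (if ((b:ℕ) % (2*m) < m ∧ (b:ℕ) + m < n) then
            (N a (finAdd b m) + (if m ≤ (a:ℕ) % (2*m) then N (finSub a m) (finAdd b m) else 0))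
          else 0) = 0 := by
        split
        · next hhb =>
          have hcoe := finAdd_coe b m hhb.2
          have z3 : N a (finAdd b m) = 0 := (hw a (finAdd b m)).2 (by
            rw [hcoe, add_m_div _ m hm hhb.1]; exact hblt)
          have t3 : (if m ≤ (a:ℕ) % (2*m) then N (finSub a m) (finAdd b m) else 0) = 0 := by
            split
            · next hha =>
              exact (hw (finSub a m) (finAdd b m)).2 (by
                rw [hfs, hcoe, sub_m_div _ m hm hha, add_m_div _ m hm hhb.1]; exact hblt)
            · rfl
          rw [z3, t3, add_zero]
        · rfl
      rw [hS, z1, t1, t2, add_zero, add_zero]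


lemma descend (k : ℕ) : ∀ s, s ≤ k → ∀ N : Matrix (Fin (2^k)) (Fin (2^k)) R2,
    Inv (2^k) (2^s) N →
    ∃ Lr Lc : List (Fin (2^k) × Fin (2^k)),
      (∀ p ∈ Lr, p.1 ≠ p.2) ∧ (∀ p ∈ Lc, p.1 ≠ p.2) ∧
      Lr.length = s * 2^(k-1) ∧ Lc.length = s * 2^(k-1) ∧
      ∀ i j : Fin (2^k), (j:ℕ) < (i:ℕ) →
        ((Lr.map fun p => elemAddPoly (2^k) p.1 p.2).prod * N *
         (Lc.map fun p => elemAddPoly (2^k) p.1 p.2).prod) i j = 0 := by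
  intro s
  induction s with
  | zero =>
    intro _ N hN
    obtain ⟨w, hw⟩ := hN
    refine ⟨[], [], by simp, by simp, by simp, by simp, ?_⟩
    intro i j hij
    simp only [List.map_nil, List.prod_nil, Matrix.one_mul, Matrix.mul_one]
    exact (hw i j).2 (by simpa [Nat.div_one] using hij)
  | succ s ih =>
    intro hsk N hN
    have hm : 0 < 2^s := pow_pos (by norm_num) s
    have h2m : 2*2^s = 2^(s+1) := by rw [pow_succ]; ring
    have hdvd : 2*2^s ∣ 2^k := by rw [h2m]; exact pow_dvd_pow 2 hsk
    have hN' : Inv (2^k) (2*2^s) N := by rw [h2m]; exact hN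
    have hstep := round_step hm hdvd N hN'
    obtain ⟨Lr₁, Lc₁, hr1, hc1, hlr1, hlc1, htri⟩ := ih (Nat.le_of_succ_le hsk) _ hstep
    have hne : ∀ p ∈ roundList (2^k) (2^s), p.1 ≠ p.2 := by
      intro p hp
      rw [mem_roundList hm] at hp
      intro h
      rw [h] at hp
      omega
    have hhalf : 2^k / 2 = 2^(k-1) := by
      have hk1 : k - 1 + 1 = k := by omega
      rw [show (2:ℕ)^k = 2^(k-1)*2 from by rw [← pow_succ, hk1],
        Nat.mul_div_cancel _ (by norm_num)]
    refine ⟨Lr₁ ++ roundList (2^k) (2^s), roundList (2^k) (2^s) ++ Lc₁, ?_, ?_, ?_, ?_, ?_⟩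
    · intro p hp
      rcases List.mem_append.mp hp with h | h
      · exact hr1 p h
      · exact hne p h
    · intro p hp
      rcases List.mem_append.mp hp with h | h
      · exact hne p h
      · exact hc1 p h
    · rw [List.length_append, hlr1, roundList_length _ _ hm hdvd, hhalf]; ring
    · rw [List.length_append, hlc1, roundList_length _ _ hm hdvd, hhalf]; ring
    · intro i j hij
      rw [List.map_append, List.map_append, List.prod_append, List.prod_append,
        roundList_prod hm]
      have hassoc :
          ((Lr₁.map fun p => elemAddPoly (2^k) p.1 p.2).prod * Rmat (2^k) (2^s)) * N *
            (Rmat (2^k) (2^s) * (Lc₁.map fun p => elemAddPoly (2^k) p.1 p.2).prod)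
          = (Lr₁.map fun p => elemAddPoly (2^k) p.1 p.2).prod *
              (Rmat (2^k) (2^s) * N * Rmat (2^k) (2^s)) *
              (Lc₁.map fun p => elemAddPoly (2^k) p.1 p.2).prod := by
        simp only [Matrix.mul_assoc]
      rw [hassoc]
      exact htri i j hij

end CircAux

/-- A `2^k × 2^k` circulant matrix over `F_2[x]` can be transformed into an
upper-triangular matrix using `k·2^k` elementary row/column addition operations. -/
theorem circulant_to_upper_triangular (k : ℕ) (hk : 1 ≤ k)
    (M : Matrix (Fin (2 ^ k)) (Fin (2 ^ k)) (Polynomial (ZMod 2)))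
    (hM : ∃ v : Fin (2 ^ k) → Polynomial (ZMod 2), M = Matrix.circulant v) :
    ∃ Lrow Lcol : List (Fin (2 ^ k) × Fin (2 ^ k)),
      (∀ p ∈ Lrow, p.1 ≠ p.2) ∧
      (∀ p ∈ Lcol, p.1 ≠ p.2) ∧
      Lrow.length + Lcol.length = k * 2 ^ k ∧
      (∀ i j : Fin (2 ^ k), (j : ℕ) < (i : ℕ) →
        ((Lrow.map fun p => elemAddPoly (2 ^ k) p.1 p.2).prod * M *
          (Lcol.map fun p => elemAddPoly (2 ^ k) p.1 p.2).prod) i j = 0) := by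
  obtain ⟨v, rfl⟩ := hM
  have hn : 0 < 2^k := pow_pos (by norm_num) k
  have hInv : CircAux.Inv (2^k) (2^k) (Matrix.circulant v) := by
    refine ⟨fun d => v ⟨d % 2^k, Nat.mod_lt _ hn⟩, fun a b => ⟨?_, ?_⟩⟩
    · intro _
      rw [Matrix.circulant_apply, Fin.sub_def]
      apply congrArg v
      apply Fin.ext
      show (2^k - (b:ℕ) + (a:ℕ)) % 2^k = ((a:ℕ) % 2^k + 2^k - (b:ℕ) % 2^k) % 2^k % 2^k
      rw [Nat.mod_mod_of_dvd _ dvd_rfl, Nat.mod_eq_of_lt a.isLt, Nat.mod_eq_of_lt b.isLt]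
      congr 1
      omega
    · intro h
      rw [Nat.div_eq_of_lt a.isLt, Nat.div_eq_of_lt b.isLt] at h
      omega
  obtain ⟨Lr, Lc, hr, hc, hlr, hlc, htri⟩ := CircAux.descend k k le_rfl _ hInv
  refine ⟨Lr, Lc, hr, hc, ?_, htri⟩
  rw [hlr, hlc]
  have hk1 : k - 1 + 1 = k := by omega
  calc k * 2^(k-1) + k * 2^(k-1) = k * (2^(k-1) * 2) := by ring
  _ = k * 2^k := by rw [← pow_succ, hk1]
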